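/- Let k ≥ 3, m ≥ 0 and n ≥ k−1 be integers. Then #{Δ ∈ P_k(m,n) : d_1 ≠ d_{k−1}} ≤ #{Δ ∈ P_k(m,n+1) : there exists 1 ≤ j ≤ k−2 with d_j > d_{j+1}, and, for the smallest such index i, γ^i_1 > γ^i_2}. -/

import Mathlib

/-- A partition: a finite nonincreasing list of positive integers. -/
structure Partn where
  parts : List ℕ
  sorted : parts.Pairwise (· ≥ ·)
  pos : ∀ x ∈ parts, 0 < x

namespace Partn

/-- The weight `|λ|` of a partition: the sum of its parts. -/
def wt (p : Partn) : ℕ := p.parts.sum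

/-- The length `ℓ(λ)`: the number of parts. -/
def len (p : Partn) : ℕ := p.parts.length

/-- The `j`-th largest part `λ_j` (1-indexed), with `λ_j = 0` for `j > ℓ(λ)`. -/
def part (p : Partn) (j : ℕ) : ℕ := p.parts.getD (j - 1) 0

/-- `f_j(λ)`: the number of parts of `λ` equal to `j`. -/
def freq (p : Partn) (j : ℕ) : ℕ := p.parts.count j

/-- The empty partition. -/
def empty : Partn := ⟨[], List.Pairwise.nil, by simp⟩

end Partn

/-- The type of `(2k-1)`-tuples `(α, β, γ^1, …, γ^{k-2}, ϖ^1, …, ϖ^{k-1})`. -/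
abbrev PTuple (k : ℕ) : Type :=
  Partn × Partn × (Fin (k - 2) → Partn) × (Fin (k - 1) → Partn)

/-- `d_j := ℓ(ϖ^j)` (1-indexed, `0` out of range). -/
def dIdx (k : ℕ) (w : Fin (k - 1) → Partn) (j : ℕ) : ℕ :=
  if h : j - 1 < k - 1 then (w ⟨j - 1, h⟩).len else 0

/-- `γ^j` (1-indexed, the empty partition out of range). -/
def gIdx (k : ℕ) (g : Fin (k - 2) → Partn) (j : ℕ) : Partn :=
  if h : j - 1 < k - 2 then g ⟨j - 1, h⟩ else Partn.empty

/-- Membership in Garvan-type set `P_k(m, n)` of `(2k-1)`-tuples of partitions. -/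
def PkMem (k : ℕ) (m : ℤ) (n : ℕ) (t : PTuple k) : Prop :=
  (∀ i : Fin (k - 1), (t.2.2.2 i).parts =
      List.replicate (t.2.2.2 i).len (t.2.2.2 i).len) ∧
  (∀ j, 1 ≤ j → j + 1 ≤ k - 1 → dIdx k t.2.2.2 (j + 1) ≤ dIdx k t.2.2.2 j) ∧
  1 ≤ dIdx k t.2.2.2 (k - 1) ∧
  (∀ x ∈ t.1.parts, x ≤ dIdx k t.2.2.2 (k - 1)) ∧
  (∀ x ∈ t.2.1.parts, x ≤ dIdx k t.2.2.2 (k - 1)) ∧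
  (t.1.len : ℤ) - (t.2.1.len : ℤ) = m ∧
  (∀ j, 1 ≤ j → j ≤ k - 2 →
      (gIdx k t.2.2.1 j).len ≤ dIdx k t.2.2.2 j - dIdx k t.2.2.2 (j + 1)) ∧
  t.1.wt + t.2.1.wt + (∑ i, (t.2.2.1 i).wt) + (∑ i, (t.2.2.2 i).wt) = n

section Aux

lemma partn_ext {p q : Partn} (h : p.parts = q.parts) : p = q := by
  cases p; cases q; simpa using h

lemma partn_finite (N : ℕ) : {p : Partn | p.wt ≤ N}.Finite := by
  apply Set.Finite.of_finite_image (f := Partn.parts) _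
    (fun a _ b _ h => partn_ext h)
  apply Set.Finite.subset ((List.finite_length_le (Fin (N+1)) N).image
    (List.map Fin.val))
  rintro l ⟨p, hp, rfl⟩
  have hlen : p.parts.length ≤ N := by
    have h1 : p.parts.length ≤ p.parts.sum :=
      List.length_le_sum_of_one_le p.parts (fun x hx => p.pos x hx)
    exact le_trans h1 hp
  have hx : ∀ x ∈ p.parts, x < N + 1 := by
    intro x hx
    have : x ≤ p.parts.sum := List.le_sum_of_mem hx
    have : p.parts.sum ≤ N := hp
    omega
  refine ⟨p.parts.map (fun x => (⟨x % (N+1), Nat.mod_lt _ (Nat.succ_pos N)⟩ :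
    Fin (N+1))), by simpa using hlen, ?_⟩
  rw [List.map_map]
  conv_rhs => rw [← List.map_id p.parts]
  apply List.map_congr_left
  intro x hxm
  simp [Nat.mod_eq_of_lt (hx x hxm)]

/-- bump: add 1 to the largest part (or create a part equal to 1). -/
def bump (p : Partn) : Partn where
  parts := (p.parts.headI + 1) :: p.parts.tail
  sorted := by
    rw [List.pairwise_cons]
    constructor
    · intro b hb
      rcases hp : p.parts with _ | ⟨a, r⟩
      · rw [hp] at hb; simp at hb
      · have hs := p.sorted; rw [hp, List.pairwise_cons] at hs
        rw [hp] at hb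
        simp only [List.headI_cons, List.tail_cons] at hb ⊢
        exact le_trans (hs.1 b hb) (Nat.le_succ a)
    · rcases hp : p.parts with _ | ⟨a, r⟩
      · simp
      · have hs := p.sorted; rw [hp, List.pairwise_cons] at hs
        simpa using hs.2
  pos := by
    intro x hx
    rw [List.mem_cons] at hx
    rcases hx with rfl | hx
    · omega
    · exact p.pos x (List.mem_of_mem_tail hx)

lemma headI_add_tail_sum (l : List ℕ) : l.headI + l.tail.sum = l.sum := by
  cases l <;> simp

lemma bump_wt (p : Partn) : (bump p).wt = p.wt + 1 := by
  show p.parts.headI + 1 + p.parts.tail.sum = p.parts.sum + 1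
  have := headI_add_tail_sum p.parts
  omega

lemma bump_len (p : Partn) :
    (bump p).len = if p.parts = [] then 1 else p.len := by
  show p.parts.tail.length + 1 = _
  rcases hp : p.parts with _ | ⟨a, r⟩ <;> simp [Partn.len, hp]

lemma bump_part (p : Partn) : (bump p).part 2 < (bump p).part 1 := by
  show ((p.parts.headI + 1) :: p.parts.tail).getD 1 0 <
    ((p.parts.headI + 1) :: p.parts.tail).getD 0 0
  rcases hp : p.parts with _ | ⟨a, r⟩
  · simp
  · have hs := p.sorted; rw [hp, List.pairwise_cons] at hs
    rcases r with _ | ⟨b, s⟩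
    · simp
    · have : b ≤ a := hs.1 b (by simp)
      simp [hp]; omega

lemma bump_inj {p q : Partn} (h : bump p = bump q) : p = q := by
  have h' : (bump p).parts = (bump q).parts := by rw [h]
  have hh : p.parts.headI = q.parts.headI ∧ p.parts.tail = q.parts.tail := by
    simpa [bump] using h'
  apply partn_ext
  rcases hp : p.parts with _ | ⟨a, r⟩ <;> rcases hq : q.parts with _ | ⟨b, s⟩
  · rfl
  · exfalso
    have := q.pos b (by rw [hq]; simp)
    rw [hp, hq] at hh; simp at hh
    omega
  · exfalso
    have := p.pos a (by rw [hp]; simp)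
    rw [hp, hq] at hh; simp at hh
    omega
  · rw [hp, hq] at hh; simp at hh
    simp [hh.1, hh.2]

end Aux
noncomputable def idx0 (k : ℕ) (w : Fin (k - 1) → Partn) : ℕ :=
  sInf {i | 1 ≤ i ∧ dIdx k w (i + 1) < dIdx k w i}

lemma idx0_spec (k : ℕ) (hk : 3 ≤ k) (w : Fin (k - 1) → Partn)
    (hmono : ∀ j, 1 ≤ j → j + 1 ≤ k - 1 → dIdx k w (j + 1) ≤ dIdx k w j)
    (hne : dIdx k w 1 ≠ dIdx k w (k - 1)) :
    1 ≤ idx0 k w ∧ idx0 k w ≤ k - 2 ∧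
      dIdx k w (idx0 k w + 1) < dIdx k w (idx0 k w) ∧
      (∀ j, 1 ≤ j → j < idx0 k w → dIdx k w (j + 1) = dIdx k w j) := by
  have hex : ∃ i, 1 ≤ i ∧ i + 1 ≤ k - 1 ∧ dIdx k w (i + 1) < dIdx k w i := by
    by_contra hc
    push_neg at hc
    have heq : ∀ j, 1 ≤ j → j ≤ k - 1 → dIdx k w j = dIdx k w 1 := by
      intro j
      induction j with
      | zero => omega
      | succ j ih =>
        intro _ h2
        rcases Nat.eq_zero_or_pos j with rfl | hj
        · rfl
        · have hj1 : 1 ≤ j := hj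
          have he : dIdx k w (j + 1) = dIdx k w j :=
            le_antisymm (hmono j hj1 h2) (hc j hj1 h2)
          rw [he]
          exact ih hj1 (by omega)
    exact hne (heq (k - 1) (by omega) le_rfl).symm
  obtain ⟨i, hi1, hi2, hi3⟩ := hex
  have hne' : {i | 1 ≤ i ∧ dIdx k w (i + 1) < dIdx k w i}.Nonempty := ⟨i, hi1, hi3⟩
  have hmem := Nat.sInf_mem hne'
  have hle : idx0 k w ≤ i := Nat.sInf_le ⟨hi1, hi3⟩
  refine ⟨hmem.1, by omega, hmem.2, ?_⟩
  intro j hj1 hj2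
  have hnm : j ∉ {i | 1 ≤ i ∧ dIdx k w (i + 1) < dIdx k w i} :=
    Nat.notMem_of_lt_sInf hj2
  simp only [Set.mem_setOf_eq, not_and, not_lt] at hnm
  exact le_antisymm (hmono j hj1 (by omega)) (hnm hj1)

noncomputable def phi (k : ℕ) (t : PTuple k) : PTuple k :=
  (t.1, t.2.1,
   fun j => if (j : ℕ) = idx0 k t.2.2.2 - 1 then bump (t.2.2.1 j) else t.2.2.1 j,
   t.2.2.2)

lemma pk_finite (k : ℕ) (m : ℤ) (n : ℕ) : {t : PTuple k | PkMem k m n t}.Finite := by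
  have h1 := partn_finite n
  have hpi2 : {f : Fin (k - 2) → Partn | ∀ i, (f i).wt ≤ n}.Finite := by
    apply (Set.Finite.pi (fun _ : Fin (k - 2) => partn_finite n)).subset
    intro f hf
    simp only [Set.mem_pi, Set.mem_univ, forall_true_left]
    intro i
    exact hf i
  have hpi3 : {f : Fin (k - 1) → Partn | ∀ i, (f i).wt ≤ n}.Finite := by
    apply (Set.Finite.pi (fun _ : Fin (k - 1) => partn_finite n)).subset
    intro f hf
    simp only [Set.mem_pi, Set.mem_univ, forall_true_left]
    intro i
    exact hf i
  apply Set.Finite.subset (h1.prod (h1.prod (hpi2.prod hpi3)))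
  rintro ⟨a, b, g, w⟩ ht
  obtain ⟨-, -, -, -, -, -, -, hsum⟩ := ht
  dsimp only at hsum
  have hg : ∀ i, (g i).wt ≤ ∑ j, (g j).wt := fun i =>
    Finset.single_le_sum (f := fun j => (g j).wt) (fun j _ => Nat.zero_le _)
      (Finset.mem_univ i)
  have hw : ∀ i, (w i).wt ≤ ∑ j, (w j).wt := fun i =>
    Finset.single_le_sum (f := fun j => (w j).wt) (fun j _ => Nat.zero_le _)
      (Finset.mem_univ i)
  refine ⟨by simp only [Set.mem_setOf_eq]; omega,
          by simp only [Set.mem_setOf_eq]; omega,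
          fun i => ?_, fun i => ?_⟩
  · have := hg i; simp only [Set.mem_setOf_eq]; omega
  · have := hw i; simp only [Set.mem_setOf_eq]; omega
/-- Lemma 5.4 (restated). -/
theorem lem_pp1 (k : ℕ) (m : ℤ) (n : ℕ) (hk : 3 ≤ k) (hm : 0 ≤ m)
    (hn : k - 1 ≤ n) :
    {t : PTuple k | PkMem k m n t ∧
        dIdx k t.2.2.2 1 ≠ dIdx k t.2.2.2 (k - 1)}.ncard ≤
      {t : PTuple k | PkMem k m (n + 1) t ∧
        ∃ i, 1 ≤ i ∧ i ≤ k - 2 ∧ dIdx k t.2.2.2 (i + 1) < dIdx k t.2.2.2 i ∧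
          (∀ j, 1 ≤ j → j < i → dIdx k t.2.2.2 (j + 1) = dIdx k t.2.2.2 j) ∧
          (gIdx k t.2.2.1 i).part 2 < (gIdx k t.2.2.1 i).part 1}.ncard := by
  classical
  apply Set.ncard_le_ncard_of_injOn (phi k) ?maps ?inj
    ((pk_finite k m (n + 1)).subset (fun t ht => ht.1))
  case maps =>
    rintro ⟨a, b, g, w⟩ ⟨hPk, hne⟩
    obtain ⟨h1, h2, h3, h4, h5, h6, h7, h8⟩ := hPk
    dsimp only at h1 h2 h3 h4 h5 h6 h7 h8 hne
    obtain ⟨hi1, hi2, hdrop, hmin⟩ := idx0_spec k hk w h2 hne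
    have hidx : idx0 k w - 1 < k - 2 := by omega
    have hphi : phi k (a, b, g, w) =
        (a, b, fun j : Fin (k - 2) =>
          if (j : ℕ) = idx0 k w - 1 then bump (g j) else g j, w) := rfl
    have hupd : (fun j : Fin (k - 2) =>
        if (j : ℕ) = idx0 k w - 1 then bump (g j) else g j)
        = Function.update g ⟨idx0 k w - 1, hidx⟩ (bump (g ⟨idx0 k w - 1, hidx⟩)) := by
      funext j
      by_cases hj : (j : ℕ) = idx0 k w - 1
      · have hje : j = ⟨idx0 k w - 1, hidx⟩ := Fin.ext hj
        subst hje
        simp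
      · simp only [if_neg hj]
        rw [Function.update_of_ne (fun hc => hj (by rw [hc]))]
    rw [Set.mem_setOf_eq, hphi]
    refine ⟨⟨h1, h2, h3, h4, h5, h6, ?_, ?_⟩, ?_⟩
    · -- γ-length condition
      intro j hj1 hj2
      dsimp only
      have hjdx : j - 1 < k - 2 := by omega
      have hold : (g ⟨j - 1, hjdx⟩).len ≤ dIdx k w j - dIdx k w (j + 1) := by
        have := h7 j hj1 hj2
        simpa [gIdx, hjdx] using this
      have hgoal : gIdx k (fun j : Fin (k - 2) =>
          if (j : ℕ) = idx0 k w - 1 then bump (g j) else g j) j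
          = if j - 1 = idx0 k w - 1 then bump (g ⟨j - 1, hjdx⟩)
            else g ⟨j - 1, hjdx⟩ := by
        simp [gIdx, hjdx]
      rw [hgoal]
      by_cases hji : j = idx0 k w
      · rw [if_pos (by omega)]
        rw [bump_len]
        split_ifs with hemp
        · have h9 := hdrop
          rw [hji]
          omega
        · exact hold
      · rw [if_neg (by omega)]
        exact hold
    · -- weight condition
      dsimp only
      have hsum' : (∑ j, ((fun j : Fin (k - 2) =>
          if (j : ℕ) = idx0 k w - 1 then bump (g j) else g j) j).wt)
          = (∑ j, (g j).wt) + 1 := by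
        rw [hupd]
        have hstep : ∑ j : Fin (k - 2),
            (Function.update g ⟨idx0 k w - 1, hidx⟩
              (bump (g ⟨idx0 k w - 1, hidx⟩)) j).wt
            = ∑ j : Fin (k - 2), Function.update (fun j => (g j).wt)
              ⟨idx0 k w - 1, hidx⟩ (bump (g ⟨idx0 k w - 1, hidx⟩)).wt j :=
          Finset.sum_congr rfl (fun j _ => by
            by_cases hj : j = ⟨idx0 k w - 1, hidx⟩
            · subst hj; simp
            · simp [Function.update_of_ne hj])
        rw [hstep, Finset.sum_update_of_mem (Finset.mem_univ _), bump_wt]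
        rw [Finset.sum_eq_add_sum_sdiff_singleton_of_mem
          (Finset.mem_univ (⟨idx0 k w - 1, hidx⟩ : Fin (k - 2)))
          (fun j => (g j).wt)]
        omega
      rw [hsum']
      omega
    · -- existential
      refine ⟨idx0 k w, hi1, hi2, hdrop, hmin, ?_⟩
      dsimp only
      have hgI : gIdx k (fun j : Fin (k - 2) =>
          if (j : ℕ) = idx0 k w - 1 then bump (g j) else g j) (idx0 k w)
          = bump (g ⟨idx0 k w - 1, hidx⟩) := by
        simp [gIdx, hidx]
      rw [hgI]
      exact bump_part _
  case inj =>
    rintro ⟨a, b, g, w⟩ _ ⟨a', b', g', w'⟩ _ heq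
    simp only [phi, Prod.mk.injEq] at heq
    obtain ⟨ea, eb, eg, ew⟩ := heq
    subst ea; subst eb; subst ew
    have hgg : g = g' := by
      funext j
      have hj' := congrFun eg j
      by_cases hj : (j : ℕ) = idx0 k w - 1
      · rw [if_pos hj, if_pos hj] at hj'
        exact bump_inj hj'
      · rwa [if_neg hj, if_neg hj] at hj'
    rw [hgg]
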